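/- For every integer n ≥ 0, the maximal number of runs a_n satisfies 4·a_n = 2n + (−1)^{n+1} + 1 (as an identity in the integers). -/

import Mathlib

open Finset

/-- The word of a permutation `σ` of `Fin n`: the letter at (0-based) position `i`,
viewed as a natural number (the letters are `0, 1, ..., n-1`, identified with the usual
letters `1, ..., n`); junk value `0` outside the range. -/
def entry {n : ℕ} (σ : Equiv.Perm (Fin n)) (i : ℕ) : ℕ :=
  if h : i < n then (σ ⟨i, h⟩ : ℕ) else 0

/-- Position `i` starts a run of the word `w`: either `i = 0`, or there is a
descent at position `i - 1`. -/
def WordRunStart (w : ℕ → ℕ) (i : ℕ) : Prop :=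
  i = 0 ∨ w i < w (i - 1)

instance (w : ℕ → ℕ) (i : ℕ) : Decidable (WordRunStart w i) :=
  inferInstanceAs (Decidable (i = 0 ∨ w i < w (i - 1)))

/-- The number of runs of the length-`m` word `w` (maximal consecutive increasing subwords). -/
def wordRuns (w : ℕ → ℕ) (m : ℕ) : ℕ :=
  ((Finset.range m).filter fun i => WordRunStart w i).card

/-- The length-`m` word `w` is flattened: the first entries of its runs,
read from left to right, increase. -/
def WordFlattened (w : ℕ → ℕ) (m : ℕ) : Prop :=
  ∀ i < m, ∀ j < m, WordRunStart w i → WordRunStart w j → i < j → w i < w j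

instance (w : ℕ → ℕ) (m : ℕ) : Decidable (WordFlattened w m) :=
  inferInstanceAs (Decidable (∀ i < m, ∀ j < m,
    WordRunStart w i → WordRunStart w j → i < j → w i < w j))

/-- Position `i` (0-based) starts a run of the permutation `σ`. -/
def IsRunStart {n : ℕ} (σ : Equiv.Perm (Fin n)) (i : ℕ) : Prop :=
  i < n ∧ WordRunStart (entry σ) i

instance {n : ℕ} (σ : Equiv.Perm (Fin n)) (i : ℕ) : Decidable (IsRunStart σ i) :=
  inferInstanceAs (Decidable (i < n ∧ WordRunStart (entry σ) i))

/-- The number of runs of the permutation `σ`. -/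
def runCount {n : ℕ} (σ : Equiv.Perm (Fin n)) : ℕ :=
  wordRuns (entry σ) n

/-- `σ` is a flattened partition. -/
def IsFlattened {n : ℕ} (σ : Equiv.Perm (Fin n)) : Prop :=
  WordFlattened (entry σ) n

instance {n : ℕ} (σ : Equiv.Perm (Fin n)) : Decidable (IsFlattened σ) :=
  inferInstanceAs (Decidable (WordFlattened (entry σ) n))

/-- `flatSet n k`: the set `F_{n,k}` of flattened partitions over `[n]` with exactly `k` runs. -/
def flatSet (n k : ℕ) : Finset (Equiv.Perm (Fin n)) :=
  Finset.univ.filter fun σ => IsFlattened σ ∧ runCount σ = k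

/-- `f n k = |F_{n,k}|`, the number of flattened partitions over `[n]` with exactly `k` runs. -/
def f (n k : ℕ) : ℕ := (flatSet n k).card

/-- `a n`: the maximal number of runs of a flattened partition over `[n]` (with `a 0 = 0`,
since the empty permutation has no runs). -/
def a (n : ℕ) : ℕ :=
  (Finset.univ.filter fun σ : Equiv.Perm (Fin n) => IsFlattened σ).sup runCount


def g (n i : ℕ) : ℕ := if i % 2 = 1 then min (i + 1) (n - 1) else i - 1

lemma g_lt {n i : ℕ} (h : i < n) : g n i < n := by
  unfold g; split <;> omega

def gfin (n : ℕ) (i : Fin n) : Fin n := ⟨g n i, g_lt i.isLt⟩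

lemma g_invol (n : ℕ) : Function.Involutive (gfin n) := by
  intro i
  have hi := i.isLt
  apply Fin.ext
  show g n (g n i) = (i : ℕ)
  unfold g
  split_ifs <;> omega

def sigma (n : ℕ) : Equiv.Perm (Fin n) := (g_invol n).toPerm (gfin n)

lemma entry_sigma (n i : ℕ) (h : i < n) : entry (sigma n) i = g n i := by
  simp [entry, h, sigma, gfin]

lemma runstart_iff (n i : ℕ) (h : i < n) :
    WordRunStart (entry (sigma n)) i ↔ i % 2 = 0 := by
  rcases Nat.eq_zero_or_pos i with rfl | hpos
  · simp [WordRunStart]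
  · have h1 : i - 1 < n := by omega
    rw [WordRunStart, entry_sigma n i h, entry_sigma n (i-1) h1]
    unfold g
    split_ifs <;> omega

lemma card_evens (n : ℕ) :
    ((Finset.range n).filter (fun i => i % 2 = 0)).card = (n + 1) / 2 := by
  induction n with
  | zero => simp
  | succ n ih =>
    rw [Finset.range_add_one, Finset.filter_insert]
    by_cases h : n % 2 = 0
    · rw [if_pos h, Finset.card_insert_of_notMem (by simp), ih]; omega
    · rw [if_neg h, ih]; omega

lemma runCount_sigma (n : ℕ) : runCount (sigma n) = (n + 1) / 2 := by
  rw [runCount, wordRuns, ← card_evens n]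
  congr 1
  apply Finset.filter_congr
  intro i hi
  simp only [Finset.mem_range] at hi
  simp [runstart_iff n i hi]

lemma flattened_sigma (n : ℕ) : IsFlattened (sigma n) := by
  intro i hi j hj hri hrj hij
  rw [runstart_iff n i hi] at hri
  rw [runstart_iff n j hj] at hrj
  rw [entry_sigma n i hi, entry_sigma n j hj]
  unfold g
  split_ifs <;> omega

lemma runCount_le {n : ℕ} (σ : Equiv.Perm (Fin n)) (h : IsFlattened σ) :
    runCount σ ≤ (n + 1) / 2 := by
  have key : ∀ i, i + 1 < n → WordRunStart (entry σ) i →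
      WordRunStart (entry σ) (i + 1) → False := by
    intro i hi h1 h2
    have h3 := h i (by omega) (i + 1) hi h1 h2 (by omega)
    rcases h2 with h2 | h2
    · omega
    · rw [Nat.add_sub_cancel] at h2; omega
  rw [runCount, wordRuns]
  calc ((Finset.range n).filter fun i => WordRunStart (entry σ) i).card
      ≤ (Finset.range ((n + 1) / 2)).card := by
        apply Finset.card_le_card_of_injOn (fun i => i / 2)
        · intro i hi
          simp only [Finset.coe_filter, Finset.mem_filter, Finset.mem_range, Set.mem_setOf_eq] at hi
          show i / 2 ∈ Finset.range ((n + 1) / 2)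
          simp only [Finset.mem_range]
          omega
        · intro i hi j hj hij
          simp only [Finset.coe_filter, Finset.mem_range, Set.mem_setOf_eq] at hi hj
          by_contra hne
          have hij2 : i / 2 = j / 2 := hij
          have : j = i + 1 ∨ i = j + 1 := by omega
          rcases this with rfl | rfl
          · exact key i hj.1 hi.2 hj.2
          · exact key j hi.1 hj.2 hi.2
    _ = (n + 1) / 2 := Finset.card_range _

lemma a_eq (n : ℕ) : a n = (n + 1) / 2 := by
  apply le_antisymm
  · apply Finset.sup_le
    intro σ hσ
    simp only [Finset.mem_filter, Finset.mem_univ, true_and] at hσ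
    exact runCount_le σ hσ
  · rw [← runCount_sigma n]
    exact Finset.le_sup (by simp [flattened_sigma n])

/-- For every integer `n ≥ 0`, the maximal number of runs `a n` satisfies
`4 ⬝ a n = 2n + (-1)^(n+1) + 1` as an identity in the integers. -/
theorem a_closed_form (n : ℕ) :
    (4 * a n : ℤ) = 2 * n + (-1) ^ (n + 1) + 1 := by
  rw [a_eq]
  rcases Nat.even_or_odd n with ⟨k, rfl⟩ | ⟨k, rfl⟩
  · have h1 : (k + k + 1) / 2 = k := by omega
    have h2 : Odd (k + k + 1) := ⟨k, by ring⟩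
    rw [h1, h2.neg_one_pow]
    push_cast; ring
  · have h1 : (2 * k + 1 + 1) / 2 = k + 1 := by omega
    have h2 : Even (2 * k + 1 + 1) := ⟨k + 1, by ring⟩
    rw [h1, h2.neg_one_pow]
    push_cast; ring
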